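/- Divergence of Q on Gaussian data: for every 0 < s ≤ 1, the sum over quadruples of integers (n₁,n₂,n₃,n₄) with n₁-n₂+n₃-n₄=0, n₂ ≠ n₁ and n₂ ≠ n₃ (equivalently n₁ ≠ n₂, n₄), of |Ψ_s(n̄)|² Π_{j=1}^4 ⟨nⱼ⟩^{-2s}, is infinite. -/
import Mathlib


/-- The Japanese bracket `⟨x⟩ = (1+x²)^{1/2}`. -/
noncomputable def jb (x : ℝ) : ℝ := Real.sqrt (1 + x ^ 2)

/-- `Ψ_s(n₁,n₂,n₃,n₄) = ⟨n₁⟩^{2s} - ⟨n₂⟩^{2s} + ⟨n₃⟩^{2s} - ⟨n₄⟩^{2s}`. -/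
noncomputable def Psi (s : ℝ) (n₁ n₂ n₃ n₄ : ℤ) : ℝ :=
  jb n₁ ^ (2 * s) - jb n₂ ^ (2 * s) + jb n₃ ^ (2 * s) - jb n₄ ^ (2 * s)

lemma jb_nonneg (x : ℝ) : 0 ≤ jb x := Real.sqrt_nonneg _

lemma jb_zero : jb 0 = 1 := by simp [jb]

lemma jb_neg (x : ℝ) : jb (-x) = jb x := by simp [jb]

lemma key (s : ℝ) (hs0 : 0 < s) {N : ℤ} (hN : (2:ℝ) ^ ((1:ℝ)/(2*s)) ≤ (N:ℝ)) :
    1 ≤ (Psi s 0 N 0 (0 - N + 0)) ^ 2 *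
          (jb ((0:ℤ):ℝ) ^ (-(2*s)) * jb (N:ℝ) ^ (-(2*s)) * jb ((0:ℤ):ℝ) ^ (-(2*s)) *
            jb (((0 - N + 0 : ℤ)):ℝ) ^ (-(2*s))) := by
  have hs2 : (0:ℝ) < 2 * s := by linarith
  set B : ℝ := jb (N:ℝ) ^ (2*s) with hBdef
  have hjb : (N:ℝ) ≤ jb (N:ℝ) := by
    have : (N:ℝ) ≤ |(N:ℝ)| := le_abs_self _
    calc (N:ℝ) ≤ |(N:ℝ)| := le_abs_self _
      _ = Real.sqrt ((N:ℝ)^2) := (Real.sqrt_sq_eq_abs _).symm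
      _ ≤ jb (N:ℝ) := Real.sqrt_le_sqrt (by nlinarith [sq_nonneg ((N:ℝ))])
  have hpow : (2:ℝ) ≤ B := by
    have h1 : ((2:ℝ) ^ ((1:ℝ)/(2*s))) ^ (2*s) ≤ jb (N:ℝ) ^ (2*s) :=
      Real.rpow_le_rpow (by positivity) (le_trans hN hjb) (le_of_lt hs2)
    have h2 : ((2:ℝ) ^ ((1:ℝ)/(2*s))) ^ (2*s) = 2 := by
      rw [← Real.rpow_mul (by norm_num)]
      rw [one_div_mul_cancel (ne_of_gt hs2), Real.rpow_one]
    linarith [h1, h2.symm.le]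
  have hBpos : (0:ℝ) < B := by linarith
  have hPsi : Psi s 0 N 0 (0 - N + 0) = 2 - 2 * B := by
    have : ((0 - N + 0 : ℤ) : ℝ) = -(N:ℝ) := by push_cast; ring
    simp [Psi, this, jb_zero, jb_neg, Real.one_rpow]
    ring
  have hw0 : jb ((0:ℤ):ℝ) ^ (-(2*s)) = 1 := by
    norm_num [jb_zero, Real.one_rpow]
  have hwN : jb (N:ℝ) ^ (-(2*s)) = B⁻¹ := by
    rw [Real.rpow_neg (jb_nonneg _)]
  have hw4 : jb (((0 - N + 0 : ℤ)):ℝ) ^ (-(2*s)) = B⁻¹ := by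
    have : ((0 - N + 0 : ℤ) : ℝ) = -(N:ℝ) := by push_cast; ring
    rw [this, jb_neg, hwN]
  rw [hPsi, hw0, hwN, hw4]
  have heq : (2 - 2*B)^2 * (1 * B⁻¹ * 1 * B⁻¹) = ((2*B - 2)/B)^2 := by
    field_simp
    ring
  rw [heq]
  have h1 : 1 ≤ (2*B - 2)/B := by
    rw [le_div_iff₀ hBpos]; linarith
  nlinarith [h1]

/-- Divergence of `Q` on Gaussian data: for every `0 < s ≤ 1`, the sum over quadruples
on the hyperplane `n₄ = n₁ - n₂ + n₃` with `n₂ ≠ n₁` and `n₂ ≠ n₃` of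
`|Ψ_s(n̄)|² Π_{j=1}^4 ⟨nⱼ⟩^{-2s}` is infinite. -/
theorem Q_variance_diverges (s : ℝ) (hs0 : 0 < s) (hs1 : s ≤ 1) :
    ¬ Summable (fun n : ℤ × ℤ × ℤ =>
      if n.2.1 ≠ n.1 ∧ n.2.1 ≠ n.2.2 then
        (Psi s n.1 n.2.1 n.2.2 (n.1 - n.2.1 + n.2.2)) ^ 2 *
          (jb n.1 ^ (-(2*s)) * jb n.2.1 ^ (-(2*s)) * jb n.2.2 ^ (-(2*s)) *
            jb ((n.1 - n.2.1 + n.2.2 : ℤ)) ^ (-(2*s)))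
      else 0) := by
  intro h
  set f : ℤ × ℤ × ℤ → ℝ := (fun n : ℤ × ℤ × ℤ =>
      if n.2.1 ≠ n.1 ∧ n.2.1 ≠ n.2.2 then
        (Psi s n.1 n.2.1 n.2.2 (n.1 - n.2.1 + n.2.2)) ^ 2 *
          (jb n.1 ^ (-(2*s)) * jb n.2.1 ^ (-(2*s)) * jb n.2.2 ^ (-(2*s)) *
            jb ((n.1 - n.2.1 + n.2.2 : ℤ)) ^ (-(2*s)))
      else 0) with hf
  have hinj : Function.Injective (fun N : ℤ => ((0:ℤ), N, (0:ℤ))) := by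
    intro a b hab
    simpa using hab
  have h2 : Filter.Tendsto (fun N : ℤ => f (0, N, 0)) Filter.cofinite (nhds 0) :=
    h.tendsto_cofinite_zero.comp hinj.tendsto_cofinite
  have h3 : ∀ᶠ N in Filter.cofinite, dist (f (0, N, 0)) 0 < 1 :=
    Metric.tendsto_nhds.mp h2 1 one_pos
  have hfin : {N : ℤ | ¬ dist (f (0, N, 0)) 0 < 1}.Finite :=
    Filter.eventually_cofinite.mp h3
  set M : ℤ := max 1 ⌈(2:ℝ) ^ ((1:ℝ)/(2*s))⌉ with hM
  have hsub : Set.Ici M ⊆ {N : ℤ | ¬ dist (f (0, N, 0)) 0 < 1} := by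
    intro N hN
    have hNM : M ≤ N := hN
    have hN1 : (1:ℤ) ≤ N := le_trans (le_max_left _ _) hNM
    have hNc : (2:ℝ) ^ ((1:ℝ)/(2*s)) ≤ (N:ℝ) := by
      have h1 : ⌈(2:ℝ) ^ ((1:ℝ)/(2*s))⌉ ≤ N := le_trans (le_max_right _ _) hNM
      calc (2:ℝ) ^ ((1:ℝ)/(2*s)) ≤ (⌈(2:ℝ) ^ ((1:ℝ)/(2*s))⌉ : ℝ) := Int.le_ceil _
        _ ≤ (N:ℝ) := by exact_mod_cast h1
    have hkey := key s hs0 hNc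
    have hN0 : N ≠ 0 := by omega
    have hval : f (0, N, 0) = (Psi s 0 N 0 (0 - N + 0)) ^ 2 *
          (jb ((0:ℤ):ℝ) ^ (-(2*s)) * jb (N:ℝ) ^ (-(2*s)) * jb ((0:ℤ):ℝ) ^ (-(2*s)) *
            jb (((0 - N + 0 : ℤ)):ℝ) ^ (-(2*s))) := by
      simp only [hf]
      rw [if_pos ⟨hN0, hN0⟩]
    simp only [Set.mem_setOf_eq, Real.dist_eq, sub_zero, not_lt]
    rw [hval]
    calc (1:ℝ) ≤ _ := hkey
      _ ≤ |_| := le_abs_self _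
  exact (Set.Ici_infinite M).mono hsub hfin
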